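/- Cross law (blue): for a triangle A1A2A3 with blue quadrances Q1, Q2, Q3 (Qi opposite Ai), Q3 nonzero denominators as needed, and s3 the blue spread at A3: (Q1+Q2−Q3)² = 4Q1Q2(1−s3). -/
import Mathlib


/-- Blue quadrance between two points. -/
def Qb {F : Type*} [Field F] (X Y : F × F) : F :=
  (Y.1 - X.1) ^ 2 + (Y.2 - X.2) ^ 2

/-- Blue spread between lines with direction vectors `u` and `v`. -/
def blueSpread {F : Type*} [Field F] (u v : F × F) : F :=
  (u.1 * v.2 - u.2 * v.1) ^ 2 / ((u.1 ^ 2 + u.2 ^ 2) * (v.1 ^ 2 + v.2 ^ 2))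

/-- Cross law (blue): `(Q1+Q2-Q3)² = 4Q1Q2(1-s3)`. -/
theorem blue_cross_law {F : Type*} [Field F] (A1 A2 A3 : F × F)
    (hQ1 : Qb A2 A3 ≠ 0) (hQ2 : Qb A1 A3 ≠ 0) :
    (Qb A2 A3 + Qb A1 A3 - Qb A1 A2) ^ 2
      = 4 * Qb A2 A3 * Qb A1 A3
          * (1 - blueSpread (A1.1 - A3.1, A1.2 - A3.2) (A2.1 - A3.1, A2.2 - A3.2)) := by
  -- proof
  unfold Qb at hQ1 hQ2
  unfold Qb blueSpread
  have h1 : (A3.1 - A2.1) ^ 2 + (A3.2 - A2.2) ^ 2 = (A2.1 - A3.1) ^ 2 + (A2.2 - A3.2) ^ 2 := by ring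
  have h2 : (A3.1 - A1.1) ^ 2 + (A3.2 - A1.2) ^ 2 = (A1.1 - A3.1) ^ 2 + (A1.2 - A3.2) ^ 2 := by ring
  rw [h1] at hQ1 ⊢
  rw [h2] at hQ2 ⊢
  field_simp
  ring
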